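/- The cut rule — from Π → A and Δ₁, A, Δ₂ → C derive Δ₁, Π, Δ₂ → C — is admissible in L* + R, for an arbitrary finite set R of Buszkowski's rules. -/

import Mathlib

/-- Formulae (types) of the Lambek calculus with a modality:
`var` = primitive type, `div B A` = B / A, `ldiv A B` = A \ B, `bang A` = !A. -/
inductive Fm : Type
  | var : ℕ → Fm
  | div : Fm → Fm → Fm
  | ldiv : Fm → Fm → Fm
  | bang : Fm → Fm
  deriving DecidableEq

open Fm

/-- A Buszkowski rule: either (B₁) "from Φ₁ → p and Φ₂ → q derive Φ₁, Φ₂ → r"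
or (B₂) "from Φ, q → p derive Φ → r", for fixed variables p, q, r. -/
inductive BRule : Type
  | b1 (p q r : ℕ)
  | b2 (p q r : ℕ)
  deriving DecidableEq

/-- L* + R: the Lambek calculus L* (empty antecedents allowed) extended with
a finite set R of Buszkowski rules. -/
inductive LStarR (R : Finset BRule) : List Fm → Fm → Prop
  | ax (A : Fm) : LStarR R [A] A
  | divL (Γ Δ₁ Δ₂ : List Fm) (A B C : Fm) :
      LStarR R Γ A → LStarR R (Δ₁ ++ B :: Δ₂) C →
      LStarR R (Δ₁ ++ div B A :: (Γ ++ Δ₂)) C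
  | divR (Γ : List Fm) (A B : Fm) :
      LStarR R (Γ ++ [A]) B → LStarR R Γ (div B A)
  | ldivL (Γ Δ₁ Δ₂ : List Fm) (A B C : Fm) :
      LStarR R Γ A → LStarR R (Δ₁ ++ B :: Δ₂) C →
      LStarR R (Δ₁ ++ Γ ++ ldiv A B :: Δ₂) C
  | ldivR (Γ : List Fm) (A B : Fm) :
      LStarR R (A :: Γ) B → LStarR R Γ (ldiv A B)
  | b1 (p q r : ℕ) (Φ₁ Φ₂ : List Fm) :
      BRule.b1 p q r ∈ R → LStarR R Φ₁ (var p) → LStarR R Φ₂ (var q) →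
      LStarR R (Φ₁ ++ Φ₂) (var r)
  | b2 (p q r : ℕ) (Φ : List Fm) :
      BRule.b2 p q r ∈ R → LStarR R (Φ ++ [var q]) (var p) →
      LStarR R Φ (var r)


def deg : Fm → ℕ
  | var _ => 1
  | div B A => deg B + deg A
  | ldiv A B => deg A + deg B
  | bang A => deg A + 1

lemma deg_pos (A : Fm) : 0 < deg A := by
  induction A with
  | var n => simp [deg]
  | div B A ihB ihA => simp [deg]; omega
  | ldiv A B ihA ihB => simp [deg]; omega
  | bang A ih => simp [deg]

lemma split2 {α : Type*} {Θ₁ Θ₂ Δ₁ Δ₂ : List α} {A : α}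
    (h : Θ₁ ++ Θ₂ = Δ₁ ++ A :: Δ₂) :
    (∃ M, Θ₁ = Δ₁ ++ A :: M ∧ Δ₂ = M ++ Θ₂) ∨
    (∃ M, Δ₁ = Θ₁ ++ M ∧ Θ₂ = M ++ A :: Δ₂) := by
  induction Θ₁ generalizing Δ₁ with
  | nil => right; exact ⟨Δ₁, by simp, by simpa using h⟩
  | cons X T ih =>
    cases Δ₁ with
    | nil =>
      simp only [List.nil_append, List.cons_append, List.cons.injEq] at h
      left; exact ⟨T, by simp [h.1], h.2.symm⟩
    | cons Y D =>
      simp only [List.cons_append, List.cons.injEq] at h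
      obtain ⟨rfl, h2⟩ := h
      rcases ih h2 with ⟨M, e1, e2⟩ | ⟨M, e1, e2⟩
      · left; exact ⟨M, by simp [e1], e2⟩
      · right; exact ⟨M, by simp [e1], e2⟩

lemma split3 {α : Type*} {Θ₁ Θ₂ Δ₁ Δ₂ : List α} {X A : α}
    (h : Θ₁ ++ X :: Θ₂ = Δ₁ ++ A :: Δ₂) :
    (∃ M, Δ₁ = Θ₁ ++ X :: M ∧ Θ₂ = M ++ A :: Δ₂) ∨
    (Δ₁ = Θ₁ ∧ A = X ∧ Δ₂ = Θ₂) ∨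
    (∃ M, Θ₁ = Δ₁ ++ A :: M ∧ Δ₂ = M ++ X :: Θ₂) := by
  rcases split2 h with ⟨M, h1, h2⟩ | ⟨M, h1, h2⟩
  · right; right; exact ⟨M, h1, h2⟩
  · cases M with
    | nil =>
      simp only [List.append_nil] at h1
      simp only [List.nil_append, List.cons.injEq] at h2
      right; left; exact ⟨h1, h2.1.symm, h2.2.symm⟩
    | cons Y M =>
      simp only [List.cons_append, List.cons.injEq] at h2
      obtain ⟨rfl, h2⟩ := h2
      left; exact ⟨M, h1, h2⟩

inductive Deriv (R : Finset BRule) : List Fm → Fm → Type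
  | ax (A : Fm) : Deriv R [A] A
  | divL (Γ Δ₁ Δ₂ : List Fm) (A B C : Fm) :
      Deriv R Γ A → Deriv R (Δ₁ ++ B :: Δ₂) C →
      Deriv R (Δ₁ ++ div B A :: (Γ ++ Δ₂)) C
  | divR (Γ : List Fm) (A B : Fm) :
      Deriv R (Γ ++ [A]) B → Deriv R Γ (div B A)
  | ldivL (Γ Δ₁ Δ₂ : List Fm) (A B C : Fm) :
      Deriv R Γ A → Deriv R (Δ₁ ++ B :: Δ₂) C →
      Deriv R (Δ₁ ++ Γ ++ ldiv A B :: Δ₂) C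
  | ldivR (Γ : List Fm) (A B : Fm) :
      Deriv R (A :: Γ) B → Deriv R Γ (ldiv A B)
  | b1 (p q r : ℕ) (Φ₁ Φ₂ : List Fm) :
      BRule.b1 p q r ∈ R → Deriv R Φ₁ (var p) → Deriv R Φ₂ (var q) →
      Deriv R (Φ₁ ++ Φ₂) (var r)
  | b2 (p q r : ℕ) (Φ : List Fm) :
      BRule.b2 p q r ∈ R → Deriv R (Φ ++ [var q]) (var p) →
      Deriv R Φ (var r)

def ht {R : Finset BRule} : ∀ {Γ C}, Deriv R Γ C → ℕ
  | _, _, .ax _ => 1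
  | _, _, .divL _ _ _ _ _ _ d e => ht d + ht e + 1
  | _, _, .divR _ _ _ d => ht d + 1
  | _, _, .ldivL _ _ _ _ _ _ d e => ht d + ht e + 1
  | _, _, .ldivR _ _ _ d => ht d + 1
  | _, _, .b1 _ _ _ _ _ _ d e => ht d + ht e + 1
  | _, _, .b2 _ _ _ _ _ d => ht d + 1

lemma ht_pos {R : Finset BRule} {Γ C} (h : Deriv R Γ C) : 1 ≤ ht h := by
  cases h <;> simp [ht]

theorem Deriv.toProp {R : Finset BRule} {Γ C} (h : Deriv R Γ C) : LStarR R Γ C := by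
  induction h with
  | ax A => exact .ax A
  | divL Γ Δ₁ Δ₂ A B C _ _ ih1 ih2 => exact .divL _ _ _ _ _ _ ih1 ih2
  | divR Γ A B _ ih => exact .divR _ _ _ ih
  | ldivL Γ Δ₁ Δ₂ A B C _ _ ih1 ih2 => exact .ldivL _ _ _ _ _ _ ih1 ih2
  | ldivR Γ A B _ ih => exact .ldivR _ _ _ ih
  | b1 p q r Φ₁ Φ₂ hm _ _ ih1 ih2 => exact .b1 p q r _ _ hm ih1 ih2
  | b2 p q r Φ hm _ ih => exact .b2 p q r _ hm ih

theorem fromProp {R : Finset BRule} {Γ C} (h : LStarR R Γ C) : Nonempty (Deriv R Γ C) := by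
  induction h with
  | ax A => exact ⟨.ax A⟩
  | divL Γ Δ₁ Δ₂ A B C _ _ ih1 ih2 =>
      obtain ⟨d1⟩ := ih1; obtain ⟨d2⟩ := ih2; exact ⟨.divL _ _ _ _ _ _ d1 d2⟩
  | divR Γ A B _ ih => obtain ⟨d⟩ := ih; exact ⟨.divR _ _ _ d⟩
  | ldivL Γ Δ₁ Δ₂ A B C _ _ ih1 ih2 =>
      obtain ⟨d1⟩ := ih1; obtain ⟨d2⟩ := ih2; exact ⟨.ldivL _ _ _ _ _ _ d1 d2⟩
  | ldivR Γ A B _ ih => obtain ⟨d⟩ := ih; exact ⟨.ldivR _ _ _ d⟩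
  | b1 p q r Φ₁ Φ₂ hm _ _ ih1 ih2 =>
      obtain ⟨d1⟩ := ih1; obtain ⟨d2⟩ := ih2; exact ⟨.b1 p q r _ _ hm d1 d2⟩
  | b2 p q r Φ hm _ ih => obtain ⟨d⟩ := ih; exact ⟨.b2 p q r _ hm d⟩

theorem cutAux (R : Finset BRule) : ∀ (d n : ℕ), ∀ (Φ Γ Δ₁ Δ₂ : List Fm) (A C : Fm)
    (h₁ : Deriv R Φ A) (h₂ : Deriv R Γ C), Γ = Δ₁ ++ A :: Δ₂ →
    deg A ≤ d → ht h₁ + ht h₂ ≤ n → LStarR R (Δ₁ ++ Φ ++ Δ₂) C := by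
  intro d
  induction d with
  | zero =>
    intro n Φ Γ Δ₁ Δ₂ A C h₁ h₂ hΓ hd hn
    have := deg_pos A; omega
  | succ d ihd =>
    intro n
    induction n with
    | zero =>
      intro Φ Γ Δ₁ Δ₂ A C h₁ h₂ hΓ hd hn
      have := ht_pos h₁; have := ht_pos h₂; omega
    | succ n ihn =>
      intro Φ Γ Δ₁ Δ₂ A C h₁ h₂ hΓ hd hn
      cases h₂ with
      | ax A₀ =>
        cases Δ₁ with
        | nil =>
          simp only [List.nil_append, List.cons.injEq] at hΓ
          obtain ⟨rfl, rfl⟩ := hΓ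
          simpa using h₁.toProp
        | cons X T =>
          exfalso
          simp only [List.cons_append, List.cons.injEq] at hΓ
          exact absurd hΓ.2 (by simp)
      | divR GG A' B prem =>
        apply LStarR.divR
        have hrec := ihn Φ (Γ ++ [A']) Δ₁ (Δ₂ ++ [A']) A B h₁ prem
          (by rw [hΓ]; simp) hd (by simp only [ht] at hn; omega)
        simpa only [List.append_assoc] using hrec
      | ldivR GG A' B prem =>
        apply LStarR.ldivR
        have hrec := ihn Φ (A' :: Γ) (A' :: Δ₁) Δ₂ A B h₁ prem
          (by rw [hΓ]; simp) hd (by simp only [ht] at hn; omega)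
        simpa only [List.cons_append, List.append_assoc] using hrec
      | b2 p q r PP hm prem =>
        apply LStarR.b2 p q r _ hm
        have hrec := ihn Φ (Γ ++ [var q]) Δ₁ (Δ₂ ++ [var q]) A (var p) h₁ prem
          (by rw [hΓ]; simp) hd (by simp only [ht] at hn; omega)
        simpa only [List.append_assoc] using hrec
      | b1 p q r Φ₁ Φ₂ hm p1 p2 =>
        rcases split2 hΓ with ⟨M, e1, e2⟩ | ⟨M, e1, e2⟩
        · subst e2
          have hrec := ihn Φ Φ₁ Δ₁ M A (var p) h₁ p1 e1 hd
            (by simp only [ht] at hn; omega)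
          have hres := LStarR.b1 p q r (Δ₁ ++ Φ ++ M) Φ₂ hm hrec p2.toProp
          simpa only [List.append_assoc] using hres
        · subst e1
          have hrec := ihn Φ Φ₂ M Δ₂ A (var q) h₁ p2 e2 hd
            (by simp only [ht] at hn; omega)
          have hres := LStarR.b1 p q r Φ₁ (M ++ Φ ++ Δ₂) hm p1.toProp hrec
          simpa only [List.append_assoc] using hres
      | divL Γ' Ε₁ Ε₂ A' B CC pl pr =>
        rcases split3 hΓ with ⟨M, e1, e2⟩ | ⟨e1, e2, e3⟩ | ⟨M, e1, e2⟩
        · -- A inside Γ' ++ Ε₂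
          subst e1
          rcases split2 e2 with ⟨N, f1, f2⟩ | ⟨N, f1, f2⟩
          · -- A inside Γ'
            subst f2
            have hrec := ihn Φ Γ' M N A A' h₁ pl f1 hd
              (by simp only [ht] at hn; omega)
            have hres := LStarR.divL (M ++ Φ ++ N) Ε₁ Ε₂ A' B C hrec pr.toProp
            simpa only [List.append_assoc, List.cons_append] using hres
          · -- A inside Ε₂
            subst f1
            have hrec := ihn Φ (Ε₁ ++ B :: Ε₂) (Ε₁ ++ [B] ++ N) Δ₂ A C h₁ pr
              (by rw [f2]; simp) hd (by simp only [ht] at hn; omega)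
            have hres := LStarR.divL Γ' Ε₁ (N ++ Φ ++ Δ₂) A' B C pl.toProp
              (by simpa only [List.append_assoc, List.singleton_append, List.cons_append, List.nil_append] using hrec)
            simpa only [List.append_assoc, List.cons_append] using hres
        · -- principal case: A = div B A'
          subst e1; subst e3; subst e2
          cases h₁ with
          | ax A₀ =>
            have hres := LStarR.divL Γ' Δ₁ Ε₂ A' B C pl.toProp pr.toProp
            simpa only [List.append_assoc, List.singleton_append] using hres
          | divR Φ₀ A₀ B₀ prem =>
            have hdB : deg B ≤ d := by have := deg_pos A'; simp [deg] at hd; omega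
            have hdA' : deg A' ≤ d := by have := deg_pos B; simp [deg] at hd; omega
            have hc1 := ihd (ht pl + ht prem) Γ' (Φ ++ [A']) Φ [] A' B pl prem
              (by simp) hdA' le_rfl
            have hc1' : LStarR R (Φ ++ Γ') B := by simpa using hc1
            obtain ⟨dB⟩ := fromProp hc1'
            have hc2 := ihd (ht dB + ht pr) (Φ ++ Γ') (Δ₁ ++ B :: Ε₂) Δ₁ Ε₂ B C dB pr
              rfl hdB le_rfl
            simpa only [List.append_assoc] using hc2
          | divL Γ₀ Θ₁ Θ₂ A₀ B₀ C₁ pl₀ pr₀ =>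
            have hrec := ihn (Θ₁ ++ B₀ :: Θ₂) (Δ₁ ++ div B A' :: (Γ' ++ Ε₂)) Δ₁
              (Γ' ++ Ε₂) (div B A') C pr₀ (Deriv.divL Γ' Δ₁ Ε₂ A' B C pl pr) rfl hd
              (by simp only [ht] at hn ⊢; omega)
            have hres := LStarR.divL Γ₀ (Δ₁ ++ Θ₁) (Θ₂ ++ Γ' ++ Ε₂) A₀ B₀ C pl₀.toProp
              (by simpa only [List.append_assoc, List.cons_append] using hrec)
            simpa only [List.append_assoc, List.cons_append] using hres
          | ldivL Γ₀ Θ₁ Θ₂ A₀ B₀ C₁ pl₀ pr₀ =>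
            have hrec := ihn (Θ₁ ++ B₀ :: Θ₂) (Δ₁ ++ div B A' :: (Γ' ++ Ε₂)) Δ₁
              (Γ' ++ Ε₂) (div B A') C pr₀ (Deriv.divL Γ' Δ₁ Ε₂ A' B C pl pr) rfl hd
              (by simp only [ht] at hn ⊢; omega)
            have hres := LStarR.ldivL Γ₀ (Δ₁ ++ Θ₁) (Θ₂ ++ Γ' ++ Ε₂) A₀ B₀ C pl₀.toProp
              (by simpa only [List.append_assoc, List.cons_append] using hrec)
            simpa only [List.append_assoc, List.cons_append] using hres
        · -- A inside Ε₁
          subst e2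
          have hrec := ihn Φ (Ε₁ ++ B :: Ε₂) Δ₁ (M ++ B :: Ε₂) A C h₁ pr
            (by rw [e1]; simp) hd (by simp only [ht] at hn; omega)
          have hres := LStarR.divL Γ' (Δ₁ ++ Φ ++ M) Ε₂ A' B C pl.toProp
            (by simpa only [List.append_assoc, List.cons_append] using hrec)
          simpa only [List.append_assoc, List.cons_append] using hres
      | ldivL Γ' Ε₁ Ε₂ A' B CC pl pr =>
        rcases split3 hΓ with ⟨M, e1, e2⟩ | ⟨e1, e2, e3⟩ | ⟨M, e1, e2⟩
        · -- A inside Ε₂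
          subst e1
          have hrec := ihn Φ (Ε₁ ++ B :: Ε₂) (Ε₁ ++ [B] ++ M) Δ₂ A C h₁ pr
            (by rw [e2]; simp) hd (by simp only [ht] at hn; omega)
          have hres := LStarR.ldivL Γ' Ε₁ (M ++ Φ ++ Δ₂) A' B C pl.toProp
            (by simpa only [List.append_assoc, List.singleton_append, List.cons_append, List.nil_append] using hrec)
          simpa only [List.append_assoc, List.cons_append] using hres
        · -- principal case: A = ldiv A' B
          subst e1; subst e3; subst e2
          cases h₁ with
          | ax A₀ =>
            have hres := LStarR.ldivL Γ' Ε₁ Δ₂ A' B C pl.toProp pr.toProp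
            simpa only [List.append_assoc, List.singleton_append] using hres
          | ldivR Φ₀ A₀ B₀ prem =>
            have hdB : deg B ≤ d := by have := deg_pos A'; simp [deg] at hd; omega
            have hdA' : deg A' ≤ d := by have := deg_pos B; simp [deg] at hd; omega
            have hc1 := ihd (ht pl + ht prem) Γ' (A' :: Φ) [] Φ A' B pl prem
              (by simp) hdA' le_rfl
            have hc1' : LStarR R (Γ' ++ Φ) B := by simpa using hc1
            obtain ⟨dB⟩ := fromProp hc1'
            have hc2 := ihd (ht dB + ht pr) (Γ' ++ Φ) (Ε₁ ++ B :: Δ₂) Ε₁ Δ₂ B C dB pr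
              rfl hdB le_rfl
            simpa only [List.append_assoc] using hc2
          | divL Γ₀ Θ₁ Θ₂ A₀ B₀ C₁ pl₀ pr₀ =>
            have hrec := ihn (Θ₁ ++ B₀ :: Θ₂) (Ε₁ ++ Γ' ++ ldiv A' B :: Δ₂) (Ε₁ ++ Γ')
              Δ₂ (ldiv A' B) C pr₀ (Deriv.ldivL Γ' Ε₁ Δ₂ A' B C pl pr)
              (by simp) hd (by simp only [ht] at hn ⊢; omega)
            have hres := LStarR.divL Γ₀ (Ε₁ ++ Γ' ++ Θ₁) (Θ₂ ++ Δ₂) A₀ B₀ C pl₀.toProp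
              (by simpa only [List.append_assoc, List.cons_append] using hrec)
            simpa only [List.append_assoc, List.cons_append] using hres
          | ldivL Γ₀ Θ₁ Θ₂ A₀ B₀ C₁ pl₀ pr₀ =>
            have hrec := ihn (Θ₁ ++ B₀ :: Θ₂) (Ε₁ ++ Γ' ++ ldiv A' B :: Δ₂) (Ε₁ ++ Γ')
              Δ₂ (ldiv A' B) C pr₀ (Deriv.ldivL Γ' Ε₁ Δ₂ A' B C pl pr)
              (by simp) hd (by simp only [ht] at hn ⊢; omega)
            have hres := LStarR.ldivL Γ₀ (Ε₁ ++ Γ' ++ Θ₁) (Θ₂ ++ Δ₂) A₀ B₀ C pl₀.toProp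
              (by simpa only [List.append_assoc, List.cons_append] using hrec)
            simpa only [List.append_assoc, List.cons_append] using hres
        · -- A inside Ε₁ ++ Γ'
          subst e2
          rcases split2 e1 with ⟨N, f1, f2⟩ | ⟨N, f1, f2⟩
          · -- A inside Ε₁
            have hrec := ihn Φ (Ε₁ ++ B :: Ε₂) Δ₁ (N ++ B :: Ε₂) A C h₁ pr
              (by rw [f1]; simp) hd (by simp only [ht] at hn; omega)
            have hres := LStarR.ldivL Γ' (Δ₁ ++ Φ ++ N) Ε₂ A' B C pl.toProp
              (by simpa only [List.append_assoc, List.cons_append] using hrec)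
            subst f2
            simpa only [List.append_assoc, List.cons_append] using hres
          · -- A inside Γ'
            have hrec := ihn Φ Γ' N M A A' h₁ pl f2 hd
              (by simp only [ht] at hn; omega)
            have hres := LStarR.ldivL (N ++ Φ ++ M) Ε₁ Ε₂ A' B C hrec pr.toProp
            subst f1
            simpa only [List.append_assoc, List.cons_append] using hres

/-- The cut rule is admissible in L* + R for an arbitrary set R of Buszkowski rules. -/
theorem stmt5 (R : Finset BRule) (Φ Δ₁ Δ₂ : List Fm) (A C : Fm)
    (h₁ : LStarR R Φ A) (h₂ : LStarR R (Δ₁ ++ A :: Δ₂) C) :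
    LStarR R (Δ₁ ++ Φ ++ Δ₂) C := by
  obtain ⟨d₁⟩ := fromProp h₁
  obtain ⟨d₂⟩ := fromProp h₂
  exact cutAux R (deg A) (ht d₁ + ht d₂) Φ _ Δ₁ Δ₂ A C d₁ d₂ rfl le_rfl le_rfl
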